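/- If n and m are natural numbers with n ≥ 2, m ≥ 2, and m_{n+m−1} ≤ M_n, then m ≤ D + N + 2·β − 1. -/

import Mathlib

open Real

/-- Lower eigenvalue estimate of Berkolaiko–Kennedy–Kurasov–Mugnolo. -/
noncomputable def mLow (L : ℝ) (N β : ℕ) (n : ℕ) : ℝ :=
  if n < N + β then (π ^ 2 / L ^ 2) * ((n : ℝ) ^ 2 / 4)
  else (π ^ 2 / L ^ 2) * ((n : ℝ) - ((N : ℝ) + (β : ℝ)) / 2) ^ 2

/-- Upper eigenvalue estimate of Berkolaiko–Kennedy–Kurasov–Mugnolo. -/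
noncomputable def MUp (L : ℝ) (D N β : ℕ) (n : ℕ) : ℝ :=
  (π ^ 2 / L ^ 2) * ((n : ℝ) - 2 + (D : ℝ) + ((N : ℝ) + (β : ℝ)) / 2 + (β : ℝ)) ^ 2

/-- If m_{n+m-1} ≤ M_n with n, m ≥ 2, then m ≤ D + N + 2β - 1. -/
theorem mult_le_of_bounds (L : ℝ) (hL : 0 < L) (D N β : ℕ)
    (n m : ℕ) (hn : 2 ≤ n) (hm : 2 ≤ m)
    (h : mLow L N β (n + m - 1) ≤ MUp L D N β n) :
    (m : ℤ) ≤ (D : ℤ) + (N : ℤ) + 2 * (β : ℤ) - 1 := by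
  unfold mLow MUp at h
  by_cases hc : n + m - 1 < N + β
  · -- then m ≤ N + β - n + 1 ≤ N + β - 1
    omega
  · rw [if_neg hc] at h
    push_neg at hc
    have hk : N + β ≤ n + m - 1 := hc
    have hcast : ((n + m - 1 : ℕ) : ℝ) = (n : ℝ) + (m : ℝ) - 1 := by
      have : 1 ≤ n + m := by omega
      push_cast [Nat.cast_sub this]
      ring
    rw [hcast] at h
    have hcpos : 0 < π ^ 2 / L ^ 2 := by positivity
    have h2 := (mul_le_mul_iff_right₀ hcpos).mp h
    have hA : (0 : ℝ) ≤ (n : ℝ) + (m : ℝ) - 1 - ((N : ℝ) + (β : ℝ)) / 2 := by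
      have : ((N + β : ℕ) : ℝ) ≤ ((n + m - 1 : ℕ) : ℝ) := by exact_mod_cast hk
      rw [hcast] at this
      push_cast at this
      linarith
    have hB : (0 : ℝ) ≤ (n : ℝ) - 2 + (D : ℝ) + ((N : ℝ) + (β : ℝ)) / 2 + (β : ℝ) := by
      have h2n : (2 : ℝ) ≤ (n : ℝ) := by exact_mod_cast hn
      have hD : (0:ℝ) ≤ (D:ℝ) := Nat.cast_nonneg D
      have hN : (0:ℝ) ≤ (N:ℝ) := Nat.cast_nonneg N
      have hβ : (0:ℝ) ≤ (β:ℝ) := Nat.cast_nonneg β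
      linarith
    have hAB : (n : ℝ) + (m : ℝ) - 1 - ((N : ℝ) + (β : ℝ)) / 2 ≤
        (n : ℝ) - 2 + (D : ℝ) + ((N : ℝ) + (β : ℝ)) / 2 + (β : ℝ) := by
      nlinarith [h2, hA, hB]
    have : (m : ℝ) ≤ (D : ℝ) + (N : ℝ) + 2 * (β : ℝ) - 1 := by linarith
    exact_mod_cast this
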